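/- For any m ≥ 2 and any γ ∈ (0,1), there exists a set V = {v^1, …, v^N} of N = 2^m − 2 two-bidder, m-item additive valuation vectors such that for every subset H ⊆ V there exists a VVCA whose revenue is 1 − γ on every v^i ∈ H and 0 on every v^i ∉ H. -/

import Mathlib

open Finset MeasureTheory

/-- An `n`-bidder, `m`-item allocation: pairwise disjoint bundles of items. -/
def Alloc (n m : ℕ) : Type :=
  {o : Fin n → Finset (Fin m) // ∀ i j, i ≠ j → o i ∩ o j = ∅}

instance (n m : ℕ) : Inhabited (Alloc n m) :=
  ⟨⟨fun _ => ∅, fun _ _ _ => by simp⟩⟩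

instance (n m : ℕ) : Fintype (Alloc n m) :=
  Subtype.fintype _

instance (n m : ℕ) : Nonempty (Alloc n m) := ⟨default⟩

/-- Maximum of a real-valued function over all allocations. -/
noncomputable def allocMax {n m : ℕ} (f : Alloc n m → ℝ) : ℝ :=
  Finset.univ.sup' Finset.univ_nonempty f

/-- A fixed (canonical) maximizer of a real-valued function over all allocations. -/
noncomputable def chooseMax {n m : ℕ} (f : Alloc n m → ℝ) : Alloc n m :=
  Classical.choose (Finset.exists_max_image Finset.univ f Finset.univ_nonempty)

/-- `os` maximizes the boosted weighted social welfare. -/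
def IsMaxAlloc {n m : ℕ} (w : Fin n → ℝ) (lam : Alloc n m → ℝ)
    (v : Fin n → Finset (Fin m) → ℝ) (os : Alloc n m) : Prop :=
  ∀ o : Alloc n m, (∑ j, w j * v j (o.1 j)) + lam o ≤ (∑ j, w j * v j (os.1 j)) + lam os

/-- Revenue of the AMA with weights `w`, boosts `lam`, on valuations `v`, when the
chosen (welfare-maximizing) allocation is `os`. -/
noncomputable def amaRev {n m : ℕ} (w : Fin n → ℝ) (lam : Alloc n m → ℝ)
    (v : Fin n → Finset (Fin m) → ℝ) (os : Alloc n m) : ℝ :=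
  ∑ j, (w j)⁻¹ *
    (allocMax (fun o => (∑ l ∈ Finset.univ.erase j, w l * v l (o.1 l)) + lam o)
      - ((∑ l ∈ Finset.univ.erase j, w l * v l (os.1 l)) + lam os))

/-- The boosts of the `c`-MBA. -/
def mbaLam {n m : ℕ} (c : ℝ) : Alloc n m → ℝ :=
  fun o => if ∃ i, o.1 i = Finset.univ then c else 0

/-- Revenue of the `c`-MBA (with a fixed tie-breaking rule). -/
noncomputable def mbaRev {n m : ℕ} (v : Fin n → Finset (Fin m) → ℝ) (c : ℝ) : ℝ :=
  amaRev (fun _ => 1) (mbaLam c) v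
    (chooseMax fun o => (∑ j, v j (o.1 j)) + mbaLam c o)

/-- Revenue of the MBARP with grand-bundle boost `c` and item reserve prices `r`
(with a fixed tie-breaking rule); the seller participates as bidder `0`. -/
noncomputable def mbarpRev {n m : ℕ} (v : Fin n → Finset (Fin m) → ℝ) (c : ℝ)
    (r : Fin m → ℝ) : ℝ :=
  let vx : Fin (n + 1) → Finset (Fin m) → ℝ :=
    fun i b => Fin.cases (∑ j ∈ b, r j) (fun i' => v i' b) i
  let g : Fin (n + 1) → Alloc (n + 1) m → ℝ :=
    fun i o => (∑ l ∈ Finset.univ.erase i, vx l (o.1 l)) + mbaLam c o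
  let os : Alloc (n + 1) m := chooseMax fun o => (∑ i, vx i (o.1 i)) + mbaLam c o
  ∑ i : Fin n, (allocMax (g i.succ) - g i.succ os)

/-- Empirical Rademacher complexity of a class `F` on the sample `S`. -/
noncomputable def empRad {X : Type*} (F : Set (X → ℝ)) {N : ℕ} (S : Fin N → X) : ℝ :=
  ((2 : ℝ) ^ N)⁻¹ * ∑ σ : Fin N → Bool,
    ⨆ f ∈ F, (N : ℝ)⁻¹ * ∑ i, (if σ i then (1 : ℝ) else -1) * f (S i)

/-- Rademacher complexity: expected empirical Rademacher complexity over i.i.d. samples. -/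
noncomputable def radComp {X : Type*} [MeasurableSpace X] (D : Measure X)
    (F : Set (X → ℝ)) (N : ℕ) : ℝ :=
  ∫ S, empRad F S ∂(Measure.pi fun _ : Fin N => D)

/-- Pseudo-shattering of the tuple `x` by the class `F`, with witnesses `z`. -/
def PShatters {X : Type*} (F : Set (X → ℝ)) {k : ℕ} (x : Fin k → X) : Prop :=
  ∃ z : Fin k → ℝ, ∀ T : Finset (Fin k), ∃ f ∈ F,
    (∀ i, i ∈ T → f (x i) ≤ z i) ∧ (∀ i, i ∉ T → z i < f (x i))

/-- A valuation is additive if it is determined by its values on singletons. -/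
def AdditiveVal {n m : ℕ} (v : Fin n → Finset (Fin m) → ℝ) : Prop :=
  ∀ i b, v i b = ∑ j ∈ b, v i {j}


section Stmt13Aux

open scoped Classical

/-- Bundle encoding: the `ℓ`-th nonempty proper bundle. -/
private def Bnd (m : ℕ) (ℓ : Fin (2 ^ m - 2)) : Finset (Fin m) :=
  Finset.univ.filter fun j => Nat.testBit (ℓ.1 + 1) j.1

private lemma mem_Bnd {m : ℕ} {ℓ : Fin (2 ^ m - 2)} {j : Fin m} :
    j ∈ Bnd m ℓ ↔ Nat.testBit (ℓ.1 + 1) j.1 := by simp [Bnd]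

private lemma two_pow_ge {m : ℕ} (hm : 2 ≤ m) : 4 ≤ 2 ^ m := by
  calc (4 : ℕ) = 2 ^ 2 := rfl
    _ ≤ 2 ^ m := Nat.pow_le_pow_right (by norm_num) hm

private lemma succ_lt_pow {m : ℕ} (ℓ : Fin (2 ^ m - 2)) : ℓ.1 + 1 < 2 ^ m := by
  have := ℓ.2
  omega

private lemma testBit_high {m : ℕ} (ℓ : Fin (2 ^ m - 2)) {i : ℕ} (hi : m ≤ i) :
    Nat.testBit (ℓ.1 + 1) i = false :=
  Nat.testBit_lt_two_pow (lt_of_lt_of_le (succ_lt_pow ℓ)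
    (Nat.pow_le_pow_right (by norm_num) hi))

private lemma Bnd_inj {m : ℕ} : Function.Injective (Bnd m) := by
  intro ℓ ℓ' h
  have hbit : ∀ i : ℕ, Nat.testBit (ℓ.1 + 1) i = Nat.testBit (ℓ'.1 + 1) i := by
    intro i
    by_cases hi : i < m
    · have := Finset.ext_iff.mp h ⟨i, hi⟩
      simp only [mem_Bnd] at this
      by_cases h1 : Nat.testBit (ℓ.1 + 1) i <;>
        by_cases h2 : Nat.testBit (ℓ'.1 + 1) i <;> simp_all
    · rw [testBit_high ℓ (le_of_not_gt hi), testBit_high ℓ' (le_of_not_gt hi)]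
  have := Nat.eq_of_testBit_eq hbit
  exact Fin.ext (by omega)

private lemma Bnd_nonempty {m : ℕ} (ℓ : Fin (2 ^ m - 2)) : (Bnd m ℓ).Nonempty := by
  rw [Finset.nonempty_iff_ne_empty]
  intro h
  have hbit : ∀ i : ℕ, Nat.testBit (ℓ.1 + 1) i = Nat.testBit 0 i := by
    intro i
    rw [Nat.zero_testBit]
    by_cases hi : i < m
    · have := Finset.ext_iff.mp h ⟨i, hi⟩
      simpa [mem_Bnd] using this
    · exact testBit_high ℓ (le_of_not_gt hi)
  have := Nat.eq_of_testBit_eq hbit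
  omega

private lemma Bnd_ne_univ {m : ℕ} (ℓ : Fin (2 ^ m - 2)) : Bnd m ℓ ≠ Finset.univ := by
  intro h
  have hbit : ∀ i : ℕ, Nat.testBit (ℓ.1 + 1) i = Nat.testBit (2 ^ m - 1) i := by
    intro i
    rw [Nat.testBit_two_pow_sub_one]
    by_cases hi : i < m
    · have := Finset.ext_iff.mp h ⟨i, hi⟩
      simpa [mem_Bnd, hi] using this
    · simp [testBit_high ℓ (le_of_not_gt hi), hi]
  have := Nat.eq_of_testBit_eq hbit
  have := ℓ.2
  omega

/-- Item value of item `j` for a bidder targeting bundle `s`. -/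
private noncomputable def chi {m : ℕ} (s : Finset (Fin m)) (j : Fin m) : ℝ :=
  if j ∈ s then 1 else -2

private lemma chi_sum {m : ℕ} (s b : Finset (Fin m)) :
    ∑ j ∈ b, chi s j = ((b ∩ s).card : ℝ) - 2 * ((b \ s).card : ℝ) := by
  rw [← Finset.sum_filter_add_sum_filter_not b (· ∈ s)]
  have h1 : Finset.filter (fun j => j ∈ s) b = b ∩ s := Finset.filter_mem_eq_inter
  have h2 : Finset.filter (fun j => ¬ j ∈ s) b = b \ s := (Finset.sdiff_eq_filter b s).symm
  rw [h1, h2]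
  have e1 : ∑ j ∈ b ∩ s, chi s j = ((b ∩ s).card : ℝ) := by
    have h : ∀ j ∈ b ∩ s, chi s j = 1 :=
      fun j hj => by simp [chi, (Finset.mem_inter.mp hj).2]
    rw [Finset.sum_congr rfl h, Finset.sum_const, nsmul_eq_mul, mul_one]
  have e2 : ∑ j ∈ b \ s, chi s j = -2 * ((b \ s).card : ℝ) := by
    have h : ∀ j ∈ b \ s, chi s j = -2 :=
      fun j hj => by simp only [chi, if_neg (Finset.mem_sdiff.mp hj).2]
    rw [Finset.sum_congr rfl h, Finset.sum_const, nsmul_eq_mul]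
    ring
  rw [e1, e2]; ring

private lemma chi_sum_self {m : ℕ} (s : Finset (Fin m)) :
    ∑ j ∈ s, chi s j = (s.card : ℝ) := by
  rw [chi_sum]; simp

/-- One-bundle allocation: bidder 0 gets `b`, bidder 1 gets nothing. -/
private def alloc1 {m : ℕ} (b : Finset (Fin m)) : Alloc 2 m :=
  ⟨fun i => if i = 0 then b else ∅, by
    intro i j hij
    by_cases hi : i = 0
    · have hj : j ≠ 0 := fun h => hij (by rw [hi, h])
      simp [hi, hj]
    · simp [hi]⟩

end Stmt13Aux

/-- For any `m ≥ 2` and `γ ∈ (0,1)`, there is a set of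
`2^m − 2` two-bidder additive valuation vectors such that for every subset `H`
there is a VVCA with revenue `1 − γ` on `H` and `0` outside `H`. -/
theorem stmt13 (m : ℕ) (hm : 2 ≤ m) (γ : ℝ) (hγ : γ ∈ Set.Ioo (0 : ℝ) 1) :
    ∃ vs : Fin (2 ^ m - 2) → (Fin 2 → Finset (Fin m) → ℝ),
      Function.Injective vs ∧
      (∀ ℓ, AdditiveVal (vs ℓ)) ∧
      ∀ H : Set (Fin (2 ^ m - 2)),
        ∃ (w : Fin 2 → ℝ) (cb : Fin 2 → Finset (Fin m) → ℝ),
          (∀ i, 0 < w i) ∧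
          ∀ ℓ, ∀ os : Alloc 2 m,
            IsMaxAlloc w (fun o => ∑ i, cb i (o.1 i)) (vs ℓ) os →
              (ℓ ∈ H → amaRev w (fun o => ∑ i, cb i (o.1 i)) (vs ℓ) os = 1 - γ) ∧
              (ℓ ∉ H → amaRev w (fun o => ∑ i, cb i (o.1 i)) (vs ℓ) os = 0) := by
  classical
  set N := 2 ^ m - 2 with hN
  -- valuations
  refine ⟨fun ℓ i b => if i = 0 then ∑ j ∈ b, chi (Bnd m ℓ) j else 0, ?_, ?_, ?_⟩
  · -- injectivity
    intro ℓ ℓ' h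
    apply Bnd_inj
    ext j
    have := congrFun (congrFun h 0) {j}
    simp only [if_pos rfl, Finset.sum_singleton] at this
    by_cases h1 : j ∈ Bnd m ℓ <;> by_cases h2 : j ∈ Bnd m ℓ' <;>
      simp_all [chi] <;> norm_num at this
  · -- additivity
    intro ℓ i b
    by_cases hi : i = 0
    · simp [hi, Finset.sum_singleton]
    · simp [hi]
  · -- the VVCA for each H
    intro H
    refine ⟨fun _ => 1, fun i b => if i = 0 then
        (if ∃ ℓ' ∈ H, Bnd m ℓ' = b then γ else 1) else 0,
      fun _ => one_pos, ?_⟩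
    intro ℓ os hmax
    set s : Finset (Fin m) := Bnd m ℓ with hs
    set cb1 : Finset (Fin m) → ℝ := fun b => if ∃ ℓ' ∈ H, Bnd m ℓ' = b then γ else 1
      with hcb1
    set val : Finset (Fin m) → ℝ := fun b => ∑ j ∈ b, chi s j with hval
    have hcb_le : ∀ b, cb1 b ≤ 1 := by
      intro b; simp only [hcb1]; split
      · exact hγ.2.le
      · exact le_refl 1
    have hcb_ge : ∀ b, γ ≤ cb1 b := by
      intro b; simp only [hcb1]; split
      · exact le_refl γ
      · exact hγ.2.le
    have hcb_univ : cb1 Finset.univ = 1 := by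
      simp only [hcb1]
      rw [if_neg]
      rintro ⟨ℓ', -, h⟩
      exact Bnd_ne_univ ℓ' h
    have hcb_s : cb1 s = if ℓ ∈ H then γ else 1 := by
      by_cases hH : ℓ ∈ H
      · simp only [hcb1, hH, if_true]
        exact if_pos ⟨ℓ, hH, rfl⟩
      · simp only [hcb1, hH, if_false]
        rw [if_neg]
        rintro ⟨ℓ', hℓ', h⟩
        exact hH (Bnd_inj h ▸ hℓ')
    have hval_s : val s = (s.card : ℝ) := chi_sum_self s
    have hscard : 1 ≤ s.card := Finset.card_pos.mpr (Bnd_nonempty ℓ)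
    -- the strict maximality of bundle s for bidder 0's boosted value
    have key : ∀ b, b ≠ s → val b + cb1 b < val s + cb1 s := by
      intro b hb
      have hrhs : (s.card : ℝ) + γ ≤ val s + cb1 s := by
        rw [hval_s]
        have := hcb_ge s
        linarith
      by_cases hsub : b ⊆ s
      · have hss : b ⊂ s := HasSubset.Subset.ssubset_of_ne hsub hb
        have hcard : b.card < s.card := Finset.card_lt_card hss
        have hvb : val b = (b.card : ℝ) := by
          simp only [hval]
          rw [chi_sum, Finset.inter_eq_left.mpr hsub, Finset.sdiff_eq_empty_iff_subset.mpr hsub]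
          simp
        have h1 : (b.card : ℝ) + 1 ≤ (s.card : ℝ) := by exact_mod_cast hcard
        have := hcb_le b
        have hγ0 := hγ.1
        rw [hvb]
        linarith
      · have hne : (b \ s).Nonempty := by
          rwa [Finset.sdiff_nonempty]
        have h1 : 1 ≤ ((b \ s).card : ℝ) := by
          exact_mod_cast Finset.card_pos.mpr hne
        have h2 : ((b ∩ s).card : ℝ) ≤ (s.card : ℝ) := by
          exact_mod_cast Finset.card_le_card (Finset.inter_subset_right)
        have hvb : val b = ((b ∩ s).card : ℝ) - 2 * ((b \ s).card : ℝ) := chi_sum s b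
        have := hcb_le b
        have hγ0 := hγ.1
        rw [hvb]
        linarith
    -- the welfare function
    have hwelf : ∀ o : Alloc 2 m,
        (∑ i, (fun _ => (1:ℝ)) i * (if i = (0 : Fin 2) then ∑ j ∈ o.1 i, chi s j else 0))
          + (∑ i, (fun i b => if i = (0 : Fin 2) then
              (if ∃ ℓ' ∈ H, Bnd m ℓ' = b then γ else 1) else (0:ℝ)) i (o.1 i))
        = val (o.1 0) + cb1 (o.1 0) := by
      intro o
      simp [Fin.sum_univ_two, hval, hcb1]
    have hmax' : ∀ o : Alloc 2 m, val (o.1 0) + cb1 (o.1 0) ≤ val (os.1 0) + cb1 (os.1 0) := by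
      intro o
      have := hmax o
      simpa only [Fin.sum_univ_two, one_mul, if_pos rfl,
        show ((1 : Fin 2) = 0) = False by simp, if_false, add_zero, zero_add, ↓reduceIte] using this
    -- the allocation chosen gives bidder 0 exactly s
    have hos : os.1 0 = s := by
      by_contra hne
      have h1 := hmax' (alloc1 s)
      have h2 : (alloc1 s).1 0 = s := by simp [alloc1]
      rw [h2] at h1
      exact absurd h1 (not_le.mpr (key _ hne))
    -- compute the two allocMax terms
    have e0 : (fun o : Alloc 2 m =>
        (∑ l ∈ Finset.univ.erase (0 : Fin 2), (1:ℝ) *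
          (if l = (0:Fin 2) then ∑ j ∈ o.1 l, chi s j else 0)) + (cb1 (o.1 0) + 0))
        = fun o => cb1 (o.1 0) := by
      funext o
      rw [show Finset.univ.erase (0 : Fin 2) = {1} by decide, Finset.sum_singleton]
      simp
    have hmax0 : allocMax (fun o : Alloc 2 m => cb1 (o.1 0)) = 1 := by
      apply le_antisymm
      · exact Finset.sup'_le _ _ fun o _ => hcb_le _
      · have h := Finset.le_sup' (fun o : Alloc 2 m => cb1 (o.1 0))
          (Finset.mem_univ (alloc1 Finset.univ))
        have h2 : (alloc1 (Finset.univ : Finset (Fin m))).1 0 = Finset.univ := by simp [alloc1]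
        rw [h2, hcb_univ] at h
        exact h
    have hmax1 : allocMax (fun o : Alloc 2 m => val (o.1 0) + cb1 (o.1 0))
        = val s + cb1 s := by
      apply le_antisymm
      · apply Finset.sup'_le
        intro o _
        by_cases h : o.1 0 = s
        · rw [h]
        · exact (key _ h).le
      · have h := Finset.le_sup' (fun o : Alloc 2 m => val (o.1 0) + cb1 (o.1 0))
          (Finset.mem_univ (alloc1 s))
        have h2 : (alloc1 s).1 0 = s := by simp [alloc1]
        rw [h2] at h
        exact h
    -- expand amaRev
    have hrev : amaRev (fun _ => 1)
        (fun o => ∑ i, (fun i b => if i = (0 : Fin 2) then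
            (if ∃ ℓ' ∈ H, Bnd m ℓ' = b then γ else 1) else (0:ℝ)) i (o.1 i))
        (fun i b => if i = (0 : Fin 2) then ∑ j ∈ b, chi s j else 0) os
        = 1 - cb1 s := by
      simp only [amaRev, Fin.sum_univ_two, inv_one, one_mul,
        show Finset.univ.erase (0 : Fin 2) = {1} by decide,
        show Finset.univ.erase (1 : Fin 2) = {0} by decide,
        Finset.sum_singleton]
      have h10 : ((1 : Fin 2) = 0) = False := by simp
      simp only [h10, if_false, if_true, zero_add, add_zero]
      show (allocMax (fun o : Alloc 2 m => cb1 (o.1 0)) - cb1 (os.1 0))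
          + ((allocMax fun o : Alloc 2 m => val (o.1 0) + cb1 (o.1 0))
              - (val (os.1 0) + cb1 (os.1 0))) = 1 - cb1 s
      rw [hmax0, hmax1, hos]
      ring
    rw [hrev] at *
    constructor
    · intro hH
      rw [hcb_s, if_pos hH]
    · intro hH
      rw [hcb_s, if_neg hH]
      ring
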